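/- arXiv:2011.02562 — 2 statements merged into one kernel-verified Lean document; each statement's English description precedes it below -/
import Mathlib

section
/- For every even cycle C_k (k even, k ≥ 4) and every nonzero kernel U, the homomorphism density t(C_k, U) is strictly positive. -/
open MeasureTheory

/-- A kernel: a bounded measurable symmetric real function (its values on `[0,1]²` are the
relevant ones). -/
structure Kernel : Type where
  toFun : ℝ → ℝ → ℝ
  symm : ∀ x y, toFun x y = toFun y x
  measurable : Measurable (Function.uncurry toFun)
  bounded : ∃ C : ℝ, ∀ x y, |toFun x y| ≤ C

/-- A kernel is nonzero if it is not a.e. zero on `[0,1]²`. -/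
def Kernel.Nonzero (U : Kernel) : Prop :=
  ¬ (∀ᵐ p : ℝ × ℝ ∂(volume.restrict ((Set.Icc (0:ℝ) 1) ×ˢ (Set.Icc (0:ℝ) 1))),
      U.toFun p.1 p.2 = 0)

/-- A kernel is balanced if its marginals vanish a.e. -/
def Kernel.Balanced (U : Kernel) : Prop :=
  ∀ᵐ x ∂(volume.restrict (Set.Icc (0:ℝ) 1)), (∫ y in Set.Icc (0:ℝ) 1, U.toFun x y) = 0

/-- The product of the kernel values over the edges of a graph. -/
noncomputable def edgeProd {V : Type} (H : SimpleGraph V) (U : Kernel) (x : V → ℝ) : ℝ :=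
  ∏ᶠ e ∈ H.edgeSet, Sym2.lift ⟨fun u v => U.toFun (x u) (x v), fun u v => U.symm (x u) (x v)⟩ e

/-- The homomorphism density `t(H, U)` of a finite simple graph in a kernel. -/
noncomputable def homDensity {V : Type} [Fintype V] (H : SimpleGraph V) (U : Kernel) : ℝ :=
  ∫ x in (Set.univ.pi fun _ : V => Set.Icc (0:ℝ) 1), edgeProd H U x

open Classical in
/-- The rooted homomorphism density `t^H_U(z)` of a graph `H` rooted at `w`. -/
noncomputable def rootedDensity {V : Type} [Fintype V] (H : SimpleGraph V) (w : V)
    (U : Kernel) (z : ℝ) : ℝ :=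
  ∫ x in (Set.univ.pi fun _ : {v : V // v ≠ w} => Set.Icc (0:ℝ) 1),
    edgeProd H U (fun v => if h : v = w then z else x ⟨v, h⟩)

/-- A bundled finite simple graph. -/
structure FinGraph : Type 1 where
  V : Type
  fintypeV : Fintype V
  G : SimpleGraph V

attribute [instance] FinGraph.fintypeV

def FinGraph.of {V : Type} [h : Fintype V] (G : SimpleGraph V) : FinGraph := ⟨V, h, G⟩

noncomputable def FinGraph.density (G : FinGraph) (U : Kernel) : ℝ := homDensity G.G U

/-- Number of edges of a bundled finite graph. -/
noncomputable def FinGraph.edges (G : FinGraph) : ℕ := G.G.edgeSet.ncard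

instance finiteSubgraph {V : Type} [Finite V] (G : SimpleGraph V) : Finite G.Subgraph := by
  classical
  exact Finite.of_injective (fun G' => (G'.verts, G'.Adj))
    (fun a b h => SimpleGraph.Subgraph.ext (congrArg Prod.fst h) (congrArg Prod.snd h))

open Classical in
/-- The multiset of all subgraphs of `G` having exactly `l` edges. -/
noncomputable def FinGraph.subs (G : FinGraph) (l : ℕ) : Multiset FinGraph :=
  ((Set.toFinite {G' : G.G.Subgraph | G'.edgeSet.ncard = l}).toFinset.val).map
    fun G' => FinGraph.of G'.coe

/-- `D` is an `l`-deck: a multiset of graphs each with exactly `l` edges. -/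
def IsDeck (D : Multiset FinGraph) (l : ℕ) : Prop := ∀ G ∈ D, G.edges = l

/-- The `l`-deck of a deck `D`: all `l`-edge subgraphs of the graphs of `D`. -/
noncomputable def subDeck (D : Multiset FinGraph) (l : ℕ) : Multiset FinGraph :=
  D.bind fun G => G.subs l

/-- `s_D(H)`: the number of subgraphs isomorphic to `H` of the graphs in `D`. -/
noncomputable def sD (D : Multiset FinGraph) (H : FinGraph) : ℕ :=
  (D.map fun G => Set.ncard {G' : G.G.Subgraph | Nonempty (G'.coe ≃g H.G)}).sum

/-- The coefficient `c^D_{U,l} = Σ_{G ∈ D} Σ_{H' ∈ G[l]} t(H', U)`. -/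
noncomputable def coeff (D : Multiset FinGraph) (U : Kernel) (l : ℕ) : ℝ :=
  ((subDeck D l).map fun H => H.density U).sum

/-- All the coefficients `c^D_{U,2}, c^D_{U,4}, …, c^D_{U,l}` vanish. -/
def AllCoeffZero (D : Multiset FinGraph) (U : Kernel) (l : ℕ) : Prop :=
  ∀ k, Even k → 0 < k → k ≤ l → coeff D U k = 0

/-- Among `c^D_{U,2}, c^D_{U,4}, …, c^D_{U,l}` not all vanish and the first nonzero one
is positive. -/
def FirstNonzeroPos (D : Multiset FinGraph) (U : Kernel) (l : ℕ) : Prop :=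
  ∃ k, Even k ∧ 0 < k ∧ k ≤ l ∧ 0 < coeff D U k ∧
    ∀ j, Even j → 0 < j → j < k → coeff D U j = 0

/-- Among `c^D_{U,2}, c^D_{U,4}, …, c^D_{U,l}` not all vanish and the first nonzero one
is negative. -/
def FirstNonzeroNeg (D : Multiset FinGraph) (U : Kernel) (l : ℕ) : Prop :=
  ∃ k, Even k ∧ 0 < k ∧ k ≤ l ∧ coeff D U k < 0 ∧
    ∀ j, Even j → 0 < j → j < k → coeff D U j = 0

def ClassI (D : Multiset FinGraph) (l : ℕ) : Prop :=
  ∀ U : Kernel, U.Nonzero → FirstNonzeroPos D U l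

def ClassII (D : Multiset FinGraph) (l : ℕ) : Prop :=
  ∃ U : Kernel, FirstNonzeroNeg D U l

def ClassIII (D : Multiset FinGraph) (l : ℕ) : Prop :=
  (∃ U : Kernel, U.Nonzero ∧ AllCoeffZero D U l) ∧
  ∀ U : Kernel, AllCoeffZero D U l ∨ FirstNonzeroPos D U l

/-- The cycle `C_n` as a bundled graph. -/
def cycleF (n : ℕ) : FinGraph := FinGraph.of (SimpleGraph.cycleGraph n)

/-- The path `P_n` with `n` edges as a bundled graph. -/
def pathF (n : ℕ) : FinGraph := FinGraph.of (SimpleGraph.pathGraph (n+1))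

/-- Gluing two graphs by identifying the vertex `v` of `G` with the vertex `w` of `H`. -/
def glue {V W : Type} (G : SimpleGraph V) (H : SimpleGraph W) (v : V) (w : W) :
    SimpleGraph (V ⊕ {x : W // x ≠ w}) where
  Adj a b :=
    Sum.elim (fun a => Sum.elim (fun b => G.Adj a b) (fun b => a = v ∧ H.Adj w b.1) b)
             (fun a => Sum.elim (fun b => b = v ∧ H.Adj w a.1) (fun b => H.Adj a.1 b.1) b) a
  symm := by
    constructor
    rintro (a | a) (b | b) h
    · exact G.adj_symm h
    · exact h
    · exact h
    · exact H.adj_symm h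
  loopless := by
    constructor
    rintro (a | a) h
    · exact G.irrefl h
    · exact H.irrefl h

/-- Disjoint union of two simple graphs. -/
def disjSum {V W : Type} (G : SimpleGraph V) (H : SimpleGraph W) : SimpleGraph (V ⊕ W) where
  Adj a b :=
    Sum.elim (fun a => Sum.elim (fun b => G.Adj a b) (fun _ => False) b)
             (fun a => Sum.elim (fun _ => False) (fun b => H.Adj a b) b) a
  symm := by
    constructor
    rintro (a | a) (b | b) h
    · exact G.adj_symm h
    · exact h.elim
    · exact h.elim
    · exact H.adj_symm h
  loopless := by
    constructor
    rintro (a | a) h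
    · exact G.irrefl h
    · exact H.irrefl h

/-- Disjoint union `G ∪ H` of bundled graphs. -/
noncomputable def FinGraph.disjU (G H : FinGraph) : FinGraph := FinGraph.of (disjSum G.G H.G)

open Classical in
/-- `C_k ⊕ P_n ⊕ C_l`: two cycles joined by a path with `n` edges; for `n = 0` this is
`C_k ⊕ C_l`, two cycles sharing one vertex. (Junk value if `k = 0` or `l = 0`.) -/
noncomputable def cpcF (k n l : ℕ) : FinGraph :=
  if h : 0 < k ∧ 0 < l then
    let A := glue (SimpleGraph.cycleGraph k) (SimpleGraph.pathGraph (n+1)) ⟨0, h.1⟩ 0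
    let ep : Fin k ⊕ {x : Fin (n+1) // x ≠ 0} :=
      if hn : n = 0 then Sum.inl ⟨0, h.1⟩
      else Sum.inr ⟨Fin.last n, fun hc => hn (by simpa using congrArg Fin.val hc)⟩
    FinGraph.of (glue A (SimpleGraph.cycleGraph l) ep ⟨0, h.2⟩)
  else FinGraph.of (⊥ : SimpleGraph (Fin 0))


namespace CycleProof

open MeasureTheory Set

noncomputable def m0 : Measure ℝ := volume.restrict (Set.Icc (0:ℝ) 1)

instance : IsProbabilityMeasure m0 :=
  ⟨by simp [m0, Real.volume_Icc]⟩

noncomputable def bC (U : Kernel) : ℝ := Classical.choose U.bounded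

lemma bC_spec (U : Kernel) : ∀ x y, |U.toFun x y| ≤ bC U := Classical.choose_spec U.bounded

lemma bC_nonneg (U : Kernel) : 0 ≤ bC U := le_trans (abs_nonneg _) (bC_spec U 0 0)

/-- Iterated kernel: `Wk U n` is the kernel of the `(n+1)`-st power of the integral operator. -/
noncomputable def Wk (U : Kernel) : ℕ → ℝ → ℝ → ℝ
  | 0 => U.toFun
  | (n+1) => fun x y => ∫ z, Wk U n x z * U.toFun z y ∂m0

lemma integrable_of_bdd {α : Type*} [MeasurableSpace α] {μ : Measure α} [IsFiniteMeasure μ]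
    {f : α → ℝ} (hm : AEStronglyMeasurable f μ) {C : ℝ} (h : ∀ x, |f x| ≤ C) :
    Integrable f μ :=
  (integrable_const C).mono' hm (Filter.Eventually.of_forall (fun x => by
    simpa [Real.norm_eq_abs] using h x))

lemma Wk_measurable (U : Kernel) : ∀ n, Measurable (Function.uncurry (Wk U n))
  | 0 => U.measurable
  | (n+1) => by
      have h : StronglyMeasurable (Function.uncurry
          (fun (p : ℝ × ℝ) (z : ℝ) => Wk U n p.1 z * U.toFun z p.2)) := by
        apply Measurable.stronglyMeasurable
        apply Measurable.mul
        · exact (Wk_measurable U n).comp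
            ((measurable_fst.comp measurable_fst).prodMk measurable_snd)
        · exact U.measurable.comp
            (measurable_snd.prodMk (measurable_snd.comp measurable_fst))
      have := h.integral_prod_right (ν := m0)
      exact this.measurable

lemma Wk_bound (U : Kernel) : ∀ n, ∀ x y, |Wk U n x y| ≤ (bC U)^(n+1)
  | 0 => fun x y => by simpa [Wk] using bC_spec U x y
  | (n+1) => fun x y => by
      have : ‖∫ z, Wk U n x z * U.toFun z y ∂m0‖ ≤ (bC U)^(n+1) * bC U := by
        have h := norm_integral_le_of_norm_le_const (μ := m0)
          (f := fun z => Wk U n x z * U.toFun z y) (C := (bC U)^(n+1) * bC U) ?_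
        · simpa using h
        refine Filter.Eventually.of_forall (fun z => ?_)
        rw [Real.norm_eq_abs, abs_mul]
        exact mul_le_mul (Wk_bound U n x z) (bC_spec U z y) (abs_nonneg _)
          (pow_nonneg (bC_nonneg U) _)
      simpa [Wk, pow_succ, Real.norm_eq_abs] using this

lemma Wk_meas_left (U : Kernel) (n : ℕ) (x : ℝ) : Measurable (fun z => Wk U n x z) :=
  (Wk_measurable U n).comp (measurable_const.prodMk measurable_id)

lemma Wk_meas_right (U : Kernel) (n : ℕ) (y : ℝ) : Measurable (fun z => Wk U n z y) :=
  (Wk_measurable U n).comp (measurable_id.prodMk measurable_const)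

lemma Wk_comp (U : Kernel) (a b : ℕ) (x y : ℝ) :
    Wk U (a+b+1) x y = ∫ z, Wk U a x z * Wk U b z y ∂m0 := by
  induction b generalizing y with
  | zero => rfl
  | succ b ih =>
      have h1 : Wk U (a+(b+1)+1) x y = ∫ z, Wk U (a+b+1) x z * U.toFun z y ∂m0 := rfl
      rw [h1]
      have h2 : ∀ z, Wk U (a+b+1) x z * U.toFun z y
          = ∫ w, Wk U a x w * Wk U b w z * U.toFun z y ∂m0 := by
        intro z
        rw [ih z, ← integral_mul_const]
      simp_rw [h2]
      have hswap : (∫ z, ∫ w, Wk U a x w * Wk U b w z * U.toFun z y ∂m0 ∂m0)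
          = ∫ w, ∫ z, Wk U a x w * Wk U b w z * U.toFun z y ∂m0 ∂m0 := by
        apply integral_integral_swap
        apply integrable_of_bdd (C := (bC U)^(a+1) * ((bC U)^(b+1) * bC U))
        · apply Measurable.aestronglyMeasurable
          apply Measurable.mul
          apply Measurable.mul
          · exact (Wk_meas_left U a x).comp measurable_snd
          · exact (Wk_measurable U b).comp (measurable_snd.prodMk measurable_fst)
          · exact U.measurable.comp (measurable_fst.prodMk measurable_const)
        · rintro ⟨z, w⟩
          simp only [Function.uncurry]
          rw [abs_mul, abs_mul, ← mul_assoc]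
          refine mul_le_mul (mul_le_mul (Wk_bound U a x w) (Wk_bound U b w z) (abs_nonneg _)
            (pow_nonneg (bC_nonneg U) _)) (bC_spec U z y) (abs_nonneg _) ?_
          exact mul_nonneg (pow_nonneg (bC_nonneg U) _) (pow_nonneg (bC_nonneg U) _)
      rw [hswap]
      congr 1
      funext w
      have : ∀ z, Wk U a x w * Wk U b w z * U.toFun z y
          = Wk U a x w * (Wk U b w z * U.toFun z y) := fun z => mul_assoc _ _ _
      simp_rw [this, integral_const_mul]
      rfl

lemma Wk_symm (U : Kernel) : ∀ n, ∀ x y, Wk U n x y = Wk U n y x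
  | 0 => U.symm
  | (n+1) => fun x y => by
      have h0 : Wk U (n+1) x y = ∫ z, U.toFun x z * Wk U n z y ∂m0 := by
        have := Wk_comp U 0 n x y
        simpa [Wk] using this
      have h1 : Wk U (n+1) y x = ∫ z, Wk U n y z * U.toFun z x ∂m0 := rfl
      rw [h0, h1]
      congr 1
      funext z
      rw [Wk_symm U n z y, U.symm z x, mul_comm]

end CycleProof
namespace CycleProof

open MeasureTheory Set

/-- product of `n` copies of `m0`. -/
noncomputable def P0 (n : ℕ) : Measure (Fin n → ℝ) := Measure.pi (fun _ => m0)

instance (n : ℕ) : IsProbabilityMeasure (P0 n) := by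
  unfold P0; infer_instance

lemma restrict_pi (n : ℕ) :
    (volume : Measure (Fin n → ℝ)).restrict (Set.univ.pi fun _ => Set.Icc (0:ℝ) 1)
      = P0 n := by
  rw [MeasureTheory.volume_pi]
  symm
  apply Measure.pi_eq
  intro s hs
  rw [Measure.restrict_apply (MeasurableSet.univ_pi hs), ← Set.pi_inter_distrib,
    Measure.pi_pi]
  simp only [m0, Measure.restrict_apply (hs _)]

lemma integral_pi_succ (n : ℕ) (f : (Fin (n+1) → ℝ) → ℝ) (hf : Measurable f)
    (C : ℝ) (hC : ∀ x, |f x| ≤ C) :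
    ∫ x, f x ∂(P0 (n+1)) = ∫ a, (∫ y, f (Fin.cons a y) ∂(P0 n)) ∂m0 := by
  have hmp := MeasureTheory.measurePreserving_piFinSuccAbove
    (fun _ : Fin (n+1) => m0) 0
  set e := MeasurableEquiv.piFinSuccAbove (fun _ : Fin (n+1) => ℝ) 0 with he
  have h1 : ∫ x, f x ∂(P0 (n+1)) = ∫ p, f (e.symm p) ∂(m0.prod (P0 n)) := by
    have := (hmp.symm e).integral_comp' (f := e.symm) f
    exact this.symm
  rw [h1]
  have h2 : ∀ p : ℝ × (Fin n → ℝ), e.symm p = Fin.cons p.1 p.2 := by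
    rintro ⟨a, y⟩
    simp only [he, MeasurableEquiv.piFinSuccAbove, MeasurableEquiv.symm_mk,
      MeasurableEquiv.coe_mk]
    exact Fin.insertNth_zero' a y
  rw [integral_prod (fun p : ℝ × (Fin n → ℝ) => f (e.symm p))
    (integrable_of_bdd (C := C)
    (((hf.comp e.symm.measurable :
        Measurable fun p : ℝ × (Fin n → ℝ) => f (e.symm p))).aestronglyMeasurable)
    (fun p => hC _))]
  simp_rw [h2]

/-- `chain U n a x b` : product of kernel values along the path `a, x 0, …, x (n-1), b`. -/
noncomputable def chain (U : Kernel) : (n : ℕ) → ℝ → (Fin n → ℝ) → ℝ → ℝ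
  | 0 => fun a _ b => U.toFun a b
  | (n+1) => fun a x b => U.toFun a (x 0) * chain U n (x 0) (Fin.tail x) b

lemma chain_measurable (U : Kernel) :
    ∀ n, Measurable (fun p : ℝ × (Fin n → ℝ) × ℝ => chain U n p.1 p.2.1 p.2.2)
  | 0 => U.measurable.comp (measurable_fst.prodMk (measurable_snd.comp measurable_snd))
  | (n+1) => by
      apply Measurable.mul
      · exact U.measurable.comp (measurable_fst.prodMk
          ((measurable_pi_apply 0).comp (measurable_fst.comp measurable_snd)))
      · exact (chain_measurable U n).comp
          ((((measurable_pi_apply 0).comp (measurable_fst.comp measurable_snd))).prodMk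
            (((measurable_pi_lambda (fun (x : Fin (n+1) → ℝ) => Fin.tail x)
                (fun j => measurable_pi_apply j.succ)).comp
                (measurable_fst.comp measurable_snd)).prodMk
              (measurable_snd.comp measurable_snd)))

lemma chain_bound (U : Kernel) :
    ∀ n, ∀ a x b, |chain U n a x b| ≤ (bC U)^(n+1)
  | 0 => fun a _ b => by simpa [chain] using bC_spec U a b
  | (n+1) => fun a x b => by
      rw [show chain U (n+1) a x b = U.toFun a (x 0) * chain U n (x 0) (Fin.tail x) b from rfl,
        abs_mul, pow_succ, mul_comm (bC U ^ (n+1))]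
      exact mul_le_mul (bC_spec U a (x 0)) (chain_bound U n (x 0) (Fin.tail x) b)
        (abs_nonneg _) (bC_nonneg U)

lemma chain_integral (U : Kernel) :
    ∀ n, ∀ a b, ∫ x, chain U n a x b ∂(P0 n) = Wk U n a b
  | 0 => fun a b => by
      simp only [chain, Wk, integral_const, measure_univ, probReal_univ, smul_eq_mul,
        one_mul]
  | (n+1) => fun a b => by
      rw [integral_pi_succ n _ (by
          exact (chain_measurable U (n+1)).comp
            (measurable_const.prodMk (measurable_id.prodMk measurable_const)))
        ((bC U)^(n+2)) (fun x => chain_bound U (n+1) a x b)]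
      have h1 : ∀ t (y : Fin n → ℝ), chain U (n+1) a (Fin.cons t y) b
          = U.toFun a t * chain U n t y b := by
        intro t y
        simp [chain, Fin.tail_cons]
      simp_rw [h1]
      have h2 : ∀ t, ∫ y, U.toFun a t * chain U n t y b ∂(P0 n)
          = U.toFun a t * Wk U n t b := by
        intro t
        rw [integral_const_mul, chain_integral U n t b]
      simp_rw [h2]
      have h3 := (Wk_comp U 0 n a b).symm
      rw [Nat.zero_add] at h3
      exact h3

end CycleProof
namespace CycleProof

open MeasureTheory Set

lemma fin_one_val (n : ℕ) : ((1 : Fin (n+3)) : ℕ) = 1 := by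
  rw [Fin.val_one']
  exact Nat.mod_eq_of_lt (by omega)

lemma fin_last_add_one (N : ℕ) : Fin.last N + 1 = 0 := by
  ext
  simp [Fin.val_add, Fin.val_last, Fin.val_one', Nat.mod_self]

lemma cycle_adj (n : ℕ) (u v : Fin (n+3)) :
    (SimpleGraph.cycleGraph (n+3)).Adj u v ↔ u = v + 1 ∨ v = u + 1 := by
  rw [SimpleGraph.cycleGraph_adj']
  have hval : ∀ w : Fin (n+3), (w : ℕ) = 1 ↔ w = 1 := by
    intro w
    rw [Fin.ext_iff, fin_one_val]
  rw [hval, hval, sub_eq_iff_eq_add, sub_eq_iff_eq_add, add_comm (1 : Fin (n+3)) v,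
    add_comm (1 : Fin (n+3)) u]

lemma succ_succ_ne (n : ℕ) (u : Fin (n+3)) : u + 1 + 1 ≠ u := by
  intro h
  rw [add_assoc] at h
  have h2 : (1 : Fin (n+3)) + 1 = 0 := add_eq_left.mp h
  have h3 := congrArg Fin.val h2
  rw [Fin.val_add, fin_one_val, Fin.val_zero] at h3
  rw [Nat.mod_eq_of_lt (by omega)] at h3
  omega

lemma cycle_edgeSet (n : ℕ) :
    (SimpleGraph.cycleGraph (n+3)).edgeSet
      = Set.range (fun i : Fin (n+3) => s(i, i+1)) := by
  ext e
  refine Sym2.ind (fun u v => ?_) e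
  simp only [SimpleGraph.mem_edgeSet, Set.mem_range, cycle_adj]
  constructor
  · rintro (h | h)
    · exact ⟨v, by rw [h, Sym2.eq_swap]⟩
    · exact ⟨u, by rw [h]⟩
  · rintro ⟨i, hi⟩
    rw [Sym2.eq_iff] at hi
    rcases hi with ⟨h1, h2⟩ | ⟨h1, h2⟩
    · right; rw [← h1, ← h2]
    · left; rw [← h2, ← h1]

lemma cycle_map_inj (n : ℕ) :
    Function.Injective (fun i : Fin (n+3) => s(i, i+1)) := by
  intro i j h
  simp only [Sym2.eq_iff] at h
  rcases h with ⟨h1, _⟩ | ⟨h1, h2⟩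
  · exact h1
  · exfalso
    apply succ_succ_ne n i
    rw [h2, ← h1]

lemma edgeProd_cycle (U : Kernel) (n : ℕ) (x : Fin (n+3) → ℝ) :
    edgeProd (SimpleGraph.cycleGraph (n+3)) U x
      = ∏ i : Fin (n+3), U.toFun (x i) (x (i+1)) := by
  unfold edgeProd
  rw [cycle_edgeSet, finprod_mem_range (cycle_map_inj n), finprod_eq_prod_of_fintype]
  congr 1

lemma chain_eq_prod (U : Kernel) :
    ∀ n (x : Fin (n+1) → ℝ) (b : ℝ),
      chain U n (x 0) (Fin.tail x) b
        = (∏ i : Fin n, U.toFun (x i.castSucc) (x i.succ)) * U.toFun (x (Fin.last n)) b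
  | 0 => fun x b => by
      simp [chain, Fin.last_zero]
  | (n+1) => fun x b => by
      have hL : chain U (n+1) (x 0) (Fin.tail x) b
          = U.toFun (x 0) (x 1) * chain U n (Fin.tail x 0) (Fin.tail (Fin.tail x)) b := by
        simp [chain, Fin.tail]
      rw [hL, chain_eq_prod U n (Fin.tail x) b]
      have ht1 : ∀ i : Fin n, Fin.tail x i.castSucc = x i.castSucc.succ := fun i => rfl
      have ht2 : ∀ i : Fin n, Fin.tail x i.succ = x i.succ.succ := fun i => rfl
      have ht3 : Fin.tail x (Fin.last n) = x (Fin.last (n+1)) := by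
        simp [Fin.tail, Fin.succ_last]
      rw [ht3]
      rw [Fin.prod_univ_succ (f := fun i : Fin (n+1) => U.toFun (x i.castSucc) (x i.succ))]
      simp only [Fin.castSucc_zero, Fin.succ_zero_eq_one, mul_assoc]
      congr 2

lemma cycle_prod_chain (U : Kernel) (n : ℕ) (x : Fin (n+3) → ℝ) :
    ∏ i : Fin (n+3), U.toFun (x i) (x (i+1))
      = chain U (n+2) (x 0) (Fin.tail x) (x 0) := by
  rw [chain_eq_prod U (n+2) x (x 0)]
  rw [Fin.prod_univ_castSucc (f := fun i : Fin (n+3) => U.toFun (x i) (x (i+1)))]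
  congr 1
  · apply Finset.prod_congr rfl
    intro i _
    rw [Fin.coeSucc_eq_succ]
  · rw [fin_last_add_one]

theorem homDensity_cycle (U : Kernel) (n : ℕ) :
    homDensity (SimpleGraph.cycleGraph (n+3)) U = ∫ a, Wk U (n+2) a a ∂m0 := by
  unfold homDensity
  rw [show (∫ x in (Set.univ.pi fun _ : Fin (n+3) => Set.Icc (0:ℝ) 1),
        edgeProd (SimpleGraph.cycleGraph (n+3)) U x)
      = ∫ x, edgeProd (SimpleGraph.cycleGraph (n+3)) U x ∂(P0 (n+3)) by
    rw [← restrict_pi]]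
  have hrw : ∀ x : Fin (n+3) → ℝ, edgeProd (SimpleGraph.cycleGraph (n+3)) U x
      = chain U (n+2) (x 0) (Fin.tail x) (x 0) := by
    intro x
    rw [edgeProd_cycle, cycle_prod_chain]
  simp_rw [hrw]
  rw [integral_pi_succ (n+2) (fun x => chain U (n+2) (x 0) (Fin.tail x) (x 0))
    ((chain_measurable U (n+2)).comp
      ((measurable_pi_apply 0).prodMk
        ((measurable_pi_lambda (fun (x : Fin (n+3) → ℝ) => Fin.tail x)
          (fun j => measurable_pi_apply j.succ)).prodMk (measurable_pi_apply 0))))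
    ((bC U)^(n+3)) (fun x => chain_bound U (n+2) _ _ _)]
  congr 1
  funext a
  have h1 : ∀ y : Fin (n+2) → ℝ,
      chain U (n+2) ((Fin.cons a y : Fin (n+3) → ℝ) 0)
          (Fin.tail (Fin.cons a y : Fin (n+3) → ℝ)) ((Fin.cons a y : Fin (n+3) → ℝ) 0)
        = chain U (n+2) a y a := by
    intro y
    rw [Fin.cons_zero, Fin.tail_cons]
  simp_rw [h1]
  exact chain_integral U (n+2) a a

end CycleProof
namespace CycleProof

open MeasureTheory Set

/-- `Z U n` : the `n`-th iterated kernel vanishes a.e. (iterated form). -/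
def Z (U : Kernel) (n : ℕ) : Prop := ∀ᵐ a ∂m0, ∀ᵐ b ∂m0, Wk U n a b = 0

lemma int_sq_zero {h : ℝ → ℝ} (hm : Measurable h) {C : ℝ} (hb : ∀ z, |h z| ≤ C)
    (h0 : ∫ z, (h z)^2 ∂m0 = 0) : ∀ᵐ z ∂m0, h z = 0 := by
  have hi : Integrable (fun z => (h z)^2) m0 := by
    apply integrable_of_bdd (C := C^2) (hm.pow_const 2).aestronglyMeasurable
    intro z
    rw [abs_pow, sq_abs, ← sq_abs]
    exact pow_le_pow_left₀ (abs_nonneg _) (hb z) 2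
  have h1 := (integral_eq_zero_iff_of_nonneg (fun z => sq_nonneg (h z)) hi).mp h0
  filter_upwards [h1] with z hz
  exact pow_eq_zero_iff two_ne_zero |>.mp hz

lemma Wk_diag (U : Kernel) (j : ℕ) (a : ℝ) :
    Wk U (j+j+1) a a = ∫ z, (Wk U j a z)^2 ∂m0 := by
  rw [Wk_comp U j j a a]
  congr 1
  funext z
  rw [pow_two, Wk_symm U j z a]

lemma G_measurable (U : Kernel) (j : ℕ) :
    Measurable (fun a => ∫ z, (Wk U j a z)^2 ∂m0) := by
  have h : StronglyMeasurable (Function.uncurry (fun (a z : ℝ) => (Wk U j a z)^2)) :=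
    ((Wk_measurable U j).pow_const 2).stronglyMeasurable
  exact (h.integral_prod_right (ν := m0)).measurable

lemma int_int_sq_zero (U : Kernel) (j : ℕ)
    (h0 : ∫ a, (∫ z, (Wk U j a z)^2 ∂m0) ∂m0 = 0) : Z U j := by
  have hG0 : ∀ a, 0 ≤ ∫ z, (Wk U j a z)^2 ∂m0 :=
    fun a => integral_nonneg (fun z => sq_nonneg _)
  have hGi : Integrable (fun a => ∫ z, (Wk U j a z)^2 ∂m0) m0 := by
    apply integrable_of_bdd (C := ((bC U)^(j+1))^2) (G_measurable U j).aestronglyMeasurable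
    intro a
    have := norm_integral_le_of_norm_le_const (μ := m0)
      (f := fun z => (Wk U j a z)^2) (C := ((bC U)^(j+1))^2) ?_
    · simpa using this
    · refine Filter.Eventually.of_forall (fun z => ?_)
      rw [Real.norm_eq_abs, abs_pow, sq_abs, ← sq_abs]
      exact pow_le_pow_left₀ (abs_nonneg _) (Wk_bound U j a z) 2
  have h1 := (integral_eq_zero_iff_of_nonneg hG0 hGi).mp h0
  filter_upwards [h1] with a ha
  exact int_sq_zero (Wk_meas_left U j a) (fun z => Wk_bound U j a z) ha

lemma Z_descent (U : Kernel) (n : ℕ) (hZ : Z U (n+2)) : Z U (n+1) := by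
  have key : ∀ᵐ a ∂m0, ∫ z, (Wk U (n+1) a z)^2 ∂m0 = 0 := by
    filter_upwards [hZ] with a ha
    have hb : ∀ b, Wk U ((n+2)+n+1) a b = 0 := by
      intro b
      rw [Wk_comp U (n+2) n a b]
      apply integral_eq_zero_of_ae
      filter_upwards [ha] with z hz
      simp [hz]
    have hd : Wk U ((n+1)+(n+1)+1) a a = 0 := by
      rw [show (n+1)+(n+1)+1 = (n+2)+n+1 by omega]
      exact hb a
    rw [Wk_diag U (n+1) a] at hd
    exact hd
  filter_upwards [key] with a ha
  exact int_sq_zero (Wk_meas_left U (n+1) a) (fun z => Wk_bound U (n+1) a z) ha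

lemma Z_to_one (U : Kernel) : ∀ n, Z U (n+1) → Z U 1 := by
  intro n
  induction n with
  | zero => exact id
  | succ n ih => exact fun h => ih (Z_descent U n h)

end CycleProof
namespace CycleProof

open MeasureTheory Set

lemma zero_of_rat_intervals (g : ℝ → ℝ) (hm : Measurable g) (C : ℝ) (hC : ∀ x, |g x| ≤ C)
    (h : ∀ p q : ℚ, ∫ z in Set.Ioo (p:ℝ) (q:ℝ), g z ∂m0 = 0) :
    ∀ᵐ z ∂m0, g z = 0 := by
  have hgi : Integrable g m0 := integrable_of_bdd hm.aestronglyMeasurable hC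
  set ν₁ := m0.withDensity (fun z => ENNReal.ofReal (g z)) with hν₁
  set ν₂ := m0.withDensity (fun z => ENNReal.ofReal (-g z)) with hν₂
  have hfin : ∀ (f : ℝ → ℝ), (∀ x, |f x| ≤ C) →
      IsFiniteMeasure (m0.withDensity (fun z => ENNReal.ofReal (f z))) := by
    intro f hf
    constructor
    rw [withDensity_apply _ MeasurableSet.univ, Measure.restrict_univ]
    calc ∫⁻ z, ENNReal.ofReal (f z) ∂m0
        ≤ ∫⁻ _, ENNReal.ofReal C ∂m0 := lintegral_mono (fun z =>
          ENNReal.ofReal_le_ofReal (le_trans (le_abs_self _) (hf z)))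
      _ = ENNReal.ofReal C := by simp [measure_univ]
      _ < ⊤ := ENNReal.ofReal_lt_top
  haveI i1 : IsFiniteMeasure ν₁ := hfin g hC
  haveI i2 : IsFiniteMeasure ν₂ := hfin (fun z => -g z) (fun x => by simpa using hC x)
  have key : ∀ s : Set ℝ, MeasurableSet s →
      ∫ z in s, g z ∂m0 = (ν₁ s).toReal - (ν₂ s).toReal := by
    intro s hs
    rw [hν₁, hν₂, withDensity_apply _ hs, withDensity_apply _ hs]
    exact integral_eq_lintegral_pos_part_sub_lintegral_neg_part hgi.restrict
  have hIoo : ∀ p q : ℚ, ν₁ (Set.Ioo (p:ℝ) (q:ℝ)) = ν₂ (Set.Ioo (p:ℝ) (q:ℝ)) := by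
    intro p q
    have h2 := h p q
    rw [key _ measurableSet_Ioo, sub_eq_zero] at h2
    exact (ENNReal.toReal_eq_toReal_iff' (measure_ne_top _ _) (measure_ne_top _ _)).mp h2
  have huniv : ν₁ Set.univ = ν₂ Set.univ := by
    have h0 : ∫ z, g z ∂m0 = 0 := by
      have h2 := h (-1) 2
      have heq : m0.restrict (Set.Ioo ((-1:ℚ):ℝ) ((2:ℚ):ℝ)) = m0 := by
        rw [m0, Measure.restrict_restrict measurableSet_Ioo]
        congr 1
        apply Set.inter_eq_self_of_subset_right
        intro x hx
        simp only [Set.mem_Icc] at hx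
        simp only [Set.mem_Ioo]
        constructor
        · push_cast; linarith [hx.1]
        · push_cast; linarith [hx.2]
      rwa [heq] at h2
    have h3 := key Set.univ MeasurableSet.univ
    rw [setIntegral_univ, h0] at h3
    have := h3.symm
    rw [sub_eq_zero] at this
    exact (ENNReal.toReal_eq_toReal_iff' (measure_ne_top _ _) (measure_ne_top _ _)).mp this
  have hext : ν₁ = ν₂ := by
    refine ext_of_generate_finite _ ?_ Real.isPiSystem_Ioo_rat ?_ huniv
    · rw [BorelSpace.measurable_eq (α := ℝ)]
      exact Real.borel_eq_generateFrom_Ioo_rat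
    · rintro s hs
      simp only [Set.mem_iUnion, Set.mem_singleton_iff] at hs
      obtain ⟨p, q, _, rfl⟩ := hs
      exact hIoo p q
  -- now conclude g = 0 a.e.
  have hnull : ∀ (s : Set ℝ), MeasurableSet s → ν₂ s = 0 → (∀ z ∈ s, 0 < g z) → m0 s = 0 := by
    intro s hs hν20 hpos
    have hν10 : ν₁ s = 0 := by rw [hext]; exact hν20
    rw [hν₁, withDensity_apply _ hs] at hν10
    rw [lintegral_eq_zero_iff hm.ennreal_ofReal] at hν10
    have hmem := ae_restrict_mem hs (μ := m0)
    have : ∀ᵐ z ∂(m0.restrict s), False := by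
      filter_upwards [hν10, hmem] with z h1 h2
      have := hpos z h2
      have h1' : ENNReal.ofReal (g z) = 0 := h1
      rw [ENNReal.ofReal_eq_zero] at h1'
      linarith
    rw [ae_iff] at this
    simpa using this
  have hp : m0 {z | 0 < g z} = 0 := by
    apply hnull _ (measurableSet_lt measurable_const hm) _ (fun z hz => hz)
    rw [hν₂, withDensity_apply _ (measurableSet_lt measurable_const hm)]
    rw [setLIntegral_congr_fun (measurableSet_lt measurable_const hm)
      (fun z hz => ?_), lintegral_zero]
    simp only [Set.mem_setOf_eq] at hz
    simp [ENNReal.ofReal_eq_zero]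
    linarith
  have hq : m0 {z | g z < 0} = 0 := by
    have hsm : MeasurableSet {z : ℝ | g z < 0} := measurableSet_lt hm measurable_const
    have hν10 : ν₁ {z | g z < 0} = 0 := by
      rw [hν₁, withDensity_apply _ hsm]
      rw [setLIntegral_congr_fun hsm
        (fun z hz => ?_), lintegral_zero]
      simp only [Set.mem_setOf_eq] at hz
      simp [ENNReal.ofReal_eq_zero]
      linarith
    have hν20 : ν₂ {z | g z < 0} = 0 := by rw [← hext]; exact hν10
    rw [hν₂, withDensity_apply _ hsm] at hν20
    rw [lintegral_eq_zero_iff (f := fun z => ENNReal.ofReal (-g z)) hm.neg.ennreal_ofReal] at hν20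
    have hmem := ae_restrict_mem hsm (μ := m0)
    have : ∀ᵐ z ∂(m0.restrict {z | g z < 0}), False := by
      filter_upwards [hν20, hmem] with z h1 h2
      have h2' : g z < 0 := h2
      have h1' : ENNReal.ofReal (-g z) = 0 := h1
      rw [ENNReal.ofReal_eq_zero] at h1'
      linarith
    rw [ae_iff] at this
    simpa using this
  rw [ae_iff]
  have hsub : {z : ℝ | ¬ g z = 0} ⊆ {z | 0 < g z} ∪ {z | g z < 0} := by
    intro z hz
    simp only [Set.mem_setOf_eq] at hz ⊢
    rcases lt_or_gt_of_ne hz with h | h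
    · exact Or.inr h
    · exact Or.inl h
  refine le_antisymm ?_ zero_le
  calc m0 {z | ¬ g z = 0} ≤ m0 ({z | 0 < g z} ∪ {z | g z < 0}) := measure_mono hsub
    _ ≤ m0 {z | 0 < g z} + m0 {z | g z < 0} := measure_union_le _ _
    _ = 0 := by rw [hp, hq, add_zero]

end CycleProof
namespace CycleProof

open MeasureTheory Set

lemma Tf_zero (U : Kernel) (hZ : Z U 1) (f : ℝ → ℝ) (hf : Measurable f)
    (Cf : ℝ) (hCf : ∀ x, |f x| ≤ Cf) :
    ∀ᵐ a ∂m0, ∫ z, U.toFun a z * f z ∂m0 = 0 := by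
  set B := bC U with hB
  have hCf0 : 0 ≤ Cf := le_trans (abs_nonneg _) (hCf 0)
  have hTmeas : Measurable (fun a => ∫ z, U.toFun a z * f z ∂m0) := by
    have h : StronglyMeasurable (Function.uncurry (fun a z => U.toFun a z * f z)) :=
      (U.measurable.mul (hf.comp measurable_snd)).stronglyMeasurable
    exact (h.integral_prod_right (ν := m0)).measurable
  have hTbound : ∀ a, |∫ z, U.toFun a z * f z ∂m0| ≤ B * Cf := by
    intro a
    have h2 := norm_integral_le_of_norm_le_const (μ := m0)
      (f := fun z => U.toFun a z * f z) (C := B * Cf) (Filter.Eventually.of_forall fun z => by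
        rw [Real.norm_eq_abs, abs_mul]
        exact mul_le_mul (bC_spec U a z) (hCf z) (abs_nonneg _) (bC_nonneg U))
    simpa using h2
  apply int_sq_zero hTmeas hTbound
  have hsq : ∀ a, (∫ z, U.toFun a z * f z ∂m0)^2
      = ∫ z, (∫ w, (U.toFun a z * f z) * (U.toFun a w * f w) ∂m0) ∂m0 := by
    intro a
    rw [pow_two, ← integral_mul_const]
    congr 1
    funext z
    rw [← integral_const_mul]
  simp_rw [hsq]
  have hFm : Measurable (fun p : (ℝ × ℝ) × ℝ =>
      (U.toFun p.1.1 p.1.2 * f p.1.2) * (U.toFun p.1.1 p.2 * f p.2)) := by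
    apply Measurable.mul
    · exact (U.measurable.comp measurable_fst).mul
        (hf.comp (measurable_snd.comp measurable_fst))
    · exact (U.measurable.comp
        ((measurable_fst.comp measurable_fst).prodMk measurable_snd)).mul
        (hf.comp measurable_snd)
  have hFb : ∀ (a z w : ℝ), |(U.toFun a z * f z) * (U.toFun a w * f w)| ≤ (B*Cf) * (B*Cf) := by
    intro a z w
    rw [abs_mul, abs_mul, abs_mul]
    exact mul_le_mul (mul_le_mul (bC_spec U a z) (hCf z) (abs_nonneg _) (bC_nonneg U))
      (mul_le_mul (bC_spec U a w) (hCf w) (abs_nonneg _) (bC_nonneg U))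
      (mul_nonneg (abs_nonneg _) (abs_nonneg _)) (mul_nonneg (bC_nonneg U) hCf0)
  have hswap1 : (∫ a, ∫ z, (∫ w, (U.toFun a z * f z) * (U.toFun a w * f w) ∂m0) ∂m0 ∂m0)
      = ∫ z, ∫ a, (∫ w, (U.toFun a z * f z) * (U.toFun a w * f w) ∂m0) ∂m0 ∂m0 := by
    apply integral_integral_swap
    apply integrable_of_bdd (C := (B*Cf)*(B*Cf))
    · exact (hFm.stronglyMeasurable.integral_prod_right' (ν := m0)).measurable.aestronglyMeasurable
    · rintro ⟨a, z⟩
      have h2 := norm_integral_le_of_norm_le_const (μ := m0)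
        (f := fun w => (U.toFun a z * f z) * (U.toFun a w * f w)) (C := (B*Cf)*(B*Cf))
        (Filter.Eventually.of_forall fun w => by
          rw [Real.norm_eq_abs]; exact hFb a z w)
      simpa using h2
  rw [hswap1]
  have hswap2 : ∀ z, (∫ a, ∫ w, (U.toFun a z * f z) * (U.toFun a w * f w) ∂m0 ∂m0)
      = ∫ w, ∫ a, (U.toFun a z * f z) * (U.toFun a w * f w) ∂m0 ∂m0 := by
    intro z
    apply integral_integral_swap
    apply integrable_of_bdd (C := (B*Cf)*(B*Cf))
    · exact (hFm.comp
        ((measurable_fst.prodMk measurable_const).prodMk measurable_snd)).aestronglyMeasurable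
    · rintro ⟨a, w⟩; exact hFb a z w
  simp_rw [hswap2]
  have hinner : ∀ z w, (∫ a, (U.toFun a z * f z) * (U.toFun a w * f w) ∂m0)
      = (f z * f w) * Wk U 1 z w := by
    intro z w
    have h1 : ∀ a, (U.toFun a z * f z) * (U.toFun a w * f w)
        = (f z * f w) * (U.toFun z a * U.toFun a w) := by
      intro a
      rw [U.symm z a]
      ring
    simp_rw [h1, integral_const_mul]
    rfl
  simp_rw [hinner]
  apply integral_eq_zero_of_ae
  filter_upwards [hZ] with z hz
  have : (fun w => (f z * f w) * Wk U 1 z w) =ᵐ[m0] 0 := by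
    filter_upwards [hz] with w hw
    simp [hw]
  simp only [integral_eq_zero_of_ae this]
  rfl

lemma Z_one_to_zero (U : Kernel) (hZ : Z U 1) : Z U 0 := by
  have hall : ∀ᵐ a ∂m0, ∀ p q : ℚ,
      ∫ z, U.toFun a z * (Set.Ioo (p:ℝ) (q:ℝ)).indicator (fun _ => (1:ℝ)) z ∂m0 = 0 := by
    rw [ae_all_iff]
    intro p
    rw [ae_all_iff]
    intro q
    apply Tf_zero U hZ _ (measurable_const.indicator measurableSet_Ioo) 1
    intro x
    by_cases hx : x ∈ Set.Ioo (p:ℝ) (q:ℝ) <;> simp [hx]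
  filter_upwards [hall] with a ha
  have key : ∀ p q : ℚ, ∫ z in Set.Ioo (p:ℝ) (q:ℝ), U.toFun a z ∂m0 = 0 := by
    intro p q
    have hfun : ∀ z, U.toFun a z * (Set.Ioo (p:ℝ) (q:ℝ)).indicator (fun _ => (1:ℝ)) z
        = (Set.Ioo (p:ℝ) (q:ℝ)).indicator (fun z => U.toFun a z) z := by
      intro z
      by_cases hzm : z ∈ Set.Ioo (p:ℝ) (q:ℝ) <;> simp [hzm]
    rw [← integral_indicator measurableSet_Ioo]
    simp_rw [← hfun]
    exact ha p q
  exact zero_of_rat_intervals _ (U.measurable.comp (measurable_const.prodMk measurable_id))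
    (bC U) (fun x => bC_spec U a x) key

lemma Z_zero_absurd (U : Kernel) (hZ : Z U 0) : ¬ U.Nonzero := by
  intro hU
  apply hU
  have hprod : (volume.restrict ((Set.Icc (0:ℝ) 1) ×ˢ (Set.Icc (0:ℝ) 1)))
      = m0.prod m0 := by
    rw [m0, Measure.prod_restrict, ← Measure.volume_eq_prod]
  rw [hprod, ae_iff]
  have hs : MeasurableSet {p : ℝ × ℝ | ¬ U.toFun p.1 p.2 = 0} :=
    ((U.measurable (measurableSet_singleton 0)).compl)
  rw [Measure.measure_prod_null hs]
  filter_upwards [hZ] with a ha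
  have h1 : (Prod.mk a ⁻¹' {p : ℝ × ℝ | ¬ U.toFun p.1 p.2 = 0}) = {b | ¬ U.toFun a b = 0} := rfl
  show m0 (Prod.mk a ⁻¹' {p : ℝ × ℝ | ¬ U.toFun p.1 p.2 = 0}) = 0
  rw [h1]
  exact ae_iff.mp ha

end CycleProof

/-- For every even cycle `C_k` (`k` even, `k ≥ 4`) and every nonzero kernel `U`,
the homomorphism density `t(C_k, U)` is strictly positive. -/
theorem even_cycle_density_pos (k : ℕ) (hke : Even k) (hk4 : 4 ≤ k)
    (U : Kernel) (hU : U.Nonzero) :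
    0 < homDensity (SimpleGraph.cycleGraph k) U := by
  open CycleProof in
  obtain ⟨r, hr⟩ := hke
  obtain ⟨n, rfl⟩ : ∃ n, k = n + 3 := ⟨k - 3, by omega⟩
  rw [CycleProof.homDensity_cycle U n]
  obtain ⟨j, hj, hj1⟩ : ∃ j, n + 2 = j + j + 1 ∧ 1 ≤ j := ⟨r - 1, by omega, by omega⟩
  rw [hj]
  simp_rw [CycleProof.Wk_diag U j]
  have hnonneg : 0 ≤ ∫ a, ∫ z, (CycleProof.Wk U j a z)^2 ∂CycleProof.m0 ∂CycleProof.m0 :=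
    integral_nonneg (fun a => integral_nonneg (fun z => sq_nonneg _))
  rcases lt_or_eq_of_le hnonneg with h | h
  · exact h
  · exfalso
    have hZj : CycleProof.Z U j := CycleProof.int_int_sq_zero U j h.symm
    have hZ1 : CycleProof.Z U 1 := by
      obtain ⟨t, rfl⟩ : ∃ t, j = t + 1 := ⟨j - 1, by omega⟩
      exact CycleProof.Z_to_one U t hZj
    exact CycleProof.Z_zero_absurd U (CycleProof.Z_one_to_zero U hZ1) hU
end

section
/- For every ℓ-deck D and every kernel U, the coefficient c^D_{U,2} is nonnegative. Moreover, if s_D(P_2) > 0, then c^D_{U,2} = 0 if and only if the kernel U is balanced. -/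
open MeasureTheory

noncomputable def mu0 : Measure ℝ := volume.restrict (Set.Icc (0:ℝ) 1)

instance : IsProbabilityMeasure mu0 :=
  ⟨by simp [mu0, Real.volume_Icc]⟩

lemma integrable_bdd {α : Type*} [MeasurableSpace α] {μ : Measure α} [IsFiniteMeasure μ]
    {f : α → ℝ} (hm : Measurable f) {C : ℝ} (hC : ∀ a, |f a| ≤ C) : Integrable f μ :=
  ⟨hm.aestronglyMeasurable, HasFiniteIntegral.of_bounded (C := C)
    (Filter.Eventually.of_forall fun a => by simpa using hC a)⟩

lemma map_comp_pi {V : Type} [Fintype V] {n : ℕ} (g : Fin n → V) (hg : Function.Injective g) :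
    (Measure.pi fun _ : V => mu0).map (fun x => x ∘ g) = Measure.pi (fun _ : Fin n => mu0) := by
  have hmeas : Measurable fun x : V → ℝ => x ∘ g :=
    measurable_pi_lambda _ fun i => measurable_pi_apply (g i)
  refine (Measure.pi_eq (μ := fun _ : Fin n => mu0) fun s hs => ?_).symm
  rw [Measure.map_apply hmeas (MeasurableSet.univ_pi hs)]
  have hpre : (fun x : V → ℝ => x ∘ g) ⁻¹' (Set.univ.pi s)
      = Set.univ.pi (fun v => ⋂ i ∈ {i | g i = v}, s i) := by
    ext x
    simp only [Set.mem_preimage, Set.mem_pi, Set.mem_univ, forall_true_left, Function.comp,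
      Set.mem_iInter, Set.mem_setOf_eq]
    constructor
    · rintro h v i rfl; exact h i
    · intro h i; exact h (g i) i rfl
  rw [hpre, Measure.pi_pi]
  classical
  have key : ∀ i : Fin n, (⋂ j ∈ {j | g j = g i}, s j) = s i := by
    intro i
    have h1 : {j | g j = g i} = ({i} : Set (Fin n)) :=
      Set.ext fun j => ⟨fun h => hg h, fun h => by simp_all⟩
    rw [h1]; simp
  have key2 : ∀ v, v ∉ Set.range g → (⋂ j ∈ {j | g j = v}, s j) = Set.univ := by
    intro v hv
    have : {j | g j = v} = (∅ : Set (Fin n)) := by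
      ext j; simp only [Set.mem_setOf_eq, Set.mem_empty_iff_false, iff_false]
      exact fun h => hv ⟨j, h⟩
    rw [this]; simp
  calc ∏ v : V, mu0 (⋂ j ∈ {j | g j = v}, s j)
      = ∏ v ∈ Finset.univ.image g, mu0 (⋂ j ∈ {j | g j = v}, s j) := by
        refine (Finset.prod_subset (Finset.subset_univ _) fun v _ hv => ?_).symm
        rw [key2 v (by simpa [Set.range] using fun i => fun h => hv (Finset.mem_image.2 ⟨i, Finset.mem_univ i, h⟩))]
        exact measure_univ
    _ = ∏ i : Fin n, mu0 (⋂ j ∈ {j | g j = g i}, s j) :=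
        Finset.prod_image fun a _ b _ h => hg h
    _ = ∏ i : Fin n, mu0 (s i) := Finset.prod_congr rfl fun i _ => by rw [key i]

lemma integral_comp_pi {V : Type} [Fintype V] {n : ℕ} (g : Fin n → V)
    (hg : Function.Injective g) {Ψ : (Fin n → ℝ) → ℝ} (hΨ : Measurable Ψ) :
    ∫ x, Ψ (x ∘ g) ∂(Measure.pi fun _ : V => mu0)
      = ∫ y, Ψ y ∂(Measure.pi fun _ : Fin n => mu0) := by
  have hmeas : Measurable fun x : V → ℝ => x ∘ g :=
    measurable_pi_lambda _ fun i => measurable_pi_apply (g i)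
  rw [← map_comp_pi g hg, integral_map hmeas.aemeasurable hΨ.aestronglyMeasurable]

lemma integral_pi_fin_one (F : ℝ → ℝ) :
    ∫ w, F (w 0) ∂(Measure.pi fun _ : Fin 1 => mu0) = ∫ t, F t ∂mu0 := by
  have mp := measurePreserving_piUnique (fun _ : Fin 1 => mu0)
  have := mp.integral_comp (MeasurableEquiv.piUnique (fun _ : Fin 1 => ℝ)).measurableEmbedding F
  simpa [MeasurableEquiv.piUnique] using this

lemma integral_pi_fin_two (F : ℝ → ℝ → ℝ)
    (hm : Measurable fun p : ℝ × ℝ => F p.1 p.2) {C : ℝ} (hC : ∀ x y, |F x y| ≤ C) :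
    ∫ y, F (y 0) (y 1) ∂(Measure.pi fun _ : Fin 2 => mu0)
      = ∫ z, ∫ t, F z t ∂mu0 ∂mu0 := by
  have mp := measurePreserving_piFinSuccAbove (fun _ : Fin 2 => mu0) 0
  set e := MeasurableEquiv.piFinSuccAbove (fun _ : Fin 2 => ℝ) 0 with he
  have key := mp.integral_comp e.measurableEmbedding
    (fun q : ℝ × (Fin 1 → ℝ) => F q.1 (q.2 0))
  have h1 : ∀ y : Fin 2 → ℝ, (e y).2 0 = y 1 := fun y => rfl
  have h0 : ∀ y : Fin 2 → ℝ, (e y).1 = y 0 := fun y => rfl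
  have hG : Measurable fun q : ℝ × (Fin 1 → ℝ) => F q.1 (q.2 0) :=
    hm.comp (measurable_fst.prodMk ((measurable_pi_apply 0).comp measurable_snd))
  have hInt : Integrable (fun q : ℝ × (Fin 1 → ℝ) => F q.1 (q.2 0))
      (mu0.prod (Measure.pi fun _ : Fin 1 => mu0)) :=
    integrable_bdd hG (fun q => hC _ _)
  calc ∫ y, F (y 0) (y 1) ∂(Measure.pi fun _ : Fin 2 => mu0)
      = ∫ y, F (e y).1 ((e y).2 0) ∂(Measure.pi fun _ : Fin 2 => mu0) := by
        simp_rw [h0, h1]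
    _ = ∫ q, F q.1 (q.2 0) ∂(mu0.prod (Measure.pi fun _ : Fin 1 => mu0)) := key
    _ = ∫ z, ∫ w, F z (w 0) ∂(Measure.pi fun _ : Fin 1 => mu0) ∂mu0 := integral_prod _ hInt
    _ = ∫ z, ∫ t, F z t ∂mu0 ∂mu0 := by
        refine integral_congr_ae (Filter.Eventually.of_forall fun z => ?_)
        exact integral_pi_fin_one (F z)

lemma integral_pi_fin_three (F : ℝ → ℝ → ℝ → ℝ)
    (hm : Measurable fun p : ℝ × ℝ × ℝ => F p.1 p.2.1 p.2.2) {C : ℝ}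
    (hC : ∀ x y z, |F x y z| ≤ C) :
    ∫ y, F (y 0) (y 1) (y 2) ∂(Measure.pi fun _ : Fin 3 => mu0)
      = ∫ a, ∫ b, ∫ c, F a b c ∂mu0 ∂mu0 ∂mu0 := by
  have mp := measurePreserving_piFinSuccAbove (fun _ : Fin 3 => mu0) 0
  set e := MeasurableEquiv.piFinSuccAbove (fun _ : Fin 3 => ℝ) 0 with he
  have key := mp.integral_comp e.measurableEmbedding
    (fun q : ℝ × (Fin 2 → ℝ) => F q.1 (q.2 0) (q.2 1))
  have h0 : ∀ y : Fin 3 → ℝ, (e y).1 = y 0 := fun y => rfl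
  have h1 : ∀ y : Fin 3 → ℝ, (e y).2 0 = y 1 := fun y => rfl
  have h2 : ∀ y : Fin 3 → ℝ, (e y).2 1 = y 2 := fun y => rfl
  have hG : Measurable fun q : ℝ × (Fin 2 → ℝ) => F q.1 (q.2 0) (q.2 1) := by
    have : Measurable fun q : ℝ × (Fin 2 → ℝ) => (q.1, (q.2 0, q.2 1)) :=
      measurable_fst.prodMk (((measurable_pi_apply 0).comp measurable_snd).prodMk
        ((measurable_pi_apply 1).comp measurable_snd))
    exact hm.comp this
  have hInt : Integrable (fun q : ℝ × (Fin 2 → ℝ) => F q.1 (q.2 0) (q.2 1))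
      (mu0.prod (Measure.pi fun _ : Fin 2 => mu0)) :=
    integrable_bdd hG (fun q => hC _ _ _)
  calc ∫ y, F (y 0) (y 1) (y 2) ∂(Measure.pi fun _ : Fin 3 => mu0)
      = ∫ y, F (e y).1 ((e y).2 0) ((e y).2 1) ∂(Measure.pi fun _ : Fin 3 => mu0) := by
        simp_rw [h0, h1, h2]
    _ = ∫ q, F q.1 (q.2 0) (q.2 1) ∂(mu0.prod (Measure.pi fun _ : Fin 2 => mu0)) := key
    _ = ∫ z, ∫ w, F z (w 0) (w 1) ∂(Measure.pi fun _ : Fin 2 => mu0) ∂mu0 := integral_prod _ hInt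
    _ = ∫ a, ∫ b, ∫ c, F a b c ∂mu0 ∂mu0 ∂mu0 := by
        refine integral_congr_ae (Filter.Eventually.of_forall fun z => ?_)
        exact integral_pi_fin_two (F z) (hm.comp (measurable_const.prodMk measurable_id))
          (fun x y => hC z x y)

namespace Kernel

lemma measurable' (U : Kernel) : Measurable fun p : ℝ × ℝ => U.toFun p.1 p.2 := U.measurable

lemma boundNN (U : Kernel) : ∃ C : ℝ, 0 ≤ C ∧ ∀ x y, |U.toFun x y| ≤ C := by
  obtain ⟨C, hC⟩ := U.bounded
  exact ⟨C, le_trans (abs_nonneg _) (hC 0 0), hC⟩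

end Kernel

lemma integral_pi_edge {W : Type} [Fintype W] (U : Kernel) {a b : W} (hab : a ≠ b) :
    ∫ x, U.toFun (x a) (x b) ∂(Measure.pi fun _ : W => mu0)
      = ∫ z, ∫ t, U.toFun z t ∂mu0 ∂mu0 := by
  obtain ⟨C, hC0, hC⟩ := U.boundNN
  have hginj : Function.Injective ![a, b] := by
    intro i j h
    fin_cases i <;> fin_cases j <;> simp_all [hab, hab.symm]
  have hΨ : Measurable fun y : Fin 2 → ℝ => U.toFun (y 0) (y 1) := by
    have hp : Measurable fun y : Fin 2 → ℝ => ((y 0 : ℝ), (y 1 : ℝ)) :=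
      (measurable_pi_apply 0).prodMk (measurable_pi_apply 1)
    exact U.measurable'.comp hp
  have h := integral_comp_pi (V := W) ![a, b] hginj (Ψ := fun y => U.toFun (y 0) (y 1)) hΨ
  simp only [Function.comp, Matrix.cons_val_zero, Matrix.cons_val_one, Matrix.head_cons] at h
  rw [h]
  exact integral_pi_fin_two U.toFun U.measurable' (fun x y => hC x y)

lemma integral_pi_path {V : Type} [Fintype V] (U : Kernel) {a b c : V}
    (hab : a ≠ b) (hac : a ≠ c) (hbc : b ≠ c) :
    ∫ x, U.toFun (x a) (x b) * U.toFun (x b) (x c) ∂(Measure.pi fun _ : V => mu0)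
      = ∫ z, (∫ t, U.toFun z t ∂mu0) ^ 2 ∂mu0 := by
  obtain ⟨C, hC0, hC⟩ := U.boundNN
  have hginj : Function.Injective ![b, a, c] := by
    intro i j h
    fin_cases i <;> fin_cases j <;> simp_all [hab, hab.symm, hac, hac.symm, hbc, hbc.symm]
  have hΨ : Measurable fun y : Fin 3 → ℝ => U.toFun (y 1) (y 0) * U.toFun (y 0) (y 2) := by
    have hp1 : Measurable fun y : Fin 3 → ℝ => ((y 1 : ℝ), (y 0 : ℝ)) :=
      (measurable_pi_apply 1).prodMk (measurable_pi_apply 0)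
    have hp2 : Measurable fun y : Fin 3 → ℝ => ((y 0 : ℝ), (y 2 : ℝ)) :=
      (measurable_pi_apply 0).prodMk (measurable_pi_apply 2)
    exact (U.measurable'.comp hp1).mul (U.measurable'.comp hp2)
  have h := integral_comp_pi (V := V) ![b, a, c] hginj
    (Ψ := fun y => U.toFun (y 1) (y 0) * U.toFun (y 0) (y 2)) hΨ
  simp only [Function.comp, Matrix.cons_val_zero, Matrix.cons_val_one, Matrix.head_cons,
    Matrix.cons_val_two, Matrix.tail_cons] at h
  rw [h]
  have hm3 : Measurable fun p : ℝ × ℝ × ℝ => U.toFun p.2.1 p.1 * U.toFun p.1 p.2.2 := by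
    have hp1 : Measurable fun p : ℝ × ℝ × ℝ => (p.2.1, p.1) :=
      (measurable_fst.comp measurable_snd).prodMk measurable_fst
    have hp2 : Measurable fun p : ℝ × ℝ × ℝ => (p.1, p.2.2) :=
      measurable_fst.prodMk (measurable_snd.comp measurable_snd)
    exact (U.measurable'.comp hp1).mul (U.measurable'.comp hp2)
  have hb3 : ∀ x y z : ℝ, |U.toFun y x * U.toFun x z| ≤ C * C := by
    intro x y z
    rw [abs_mul]
    exact mul_le_mul (hC _ _) (hC _ _) (abs_nonneg _) hC0
  rw [integral_pi_fin_three (fun x y z => U.toFun y x * U.toFun x z) hm3 hb3]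
  refine integral_congr_ae (Filter.Eventually.of_forall fun a => ?_)
  have hstep : ∀ b : ℝ, ∫ c, U.toFun b a * U.toFun a c ∂mu0
      = U.toFun b a * ∫ c, U.toFun a c ∂mu0 := fun b => integral_const_mul _ _
  calc ∫ b, ∫ c, U.toFun b a * U.toFun a c ∂mu0 ∂mu0
      = ∫ b, U.toFun b a * ∫ c, U.toFun a c ∂mu0 ∂mu0 :=
        integral_congr_ae (Filter.Eventually.of_forall fun b => hstep b)
    _ = (∫ b, U.toFun b a ∂mu0) * ∫ c, U.toFun a c ∂mu0 := integral_mul_const _ _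
    _ = (∫ t, U.toFun a t ∂mu0) ^ 2 := by
        have : (fun b => U.toFun b a) = fun b => U.toFun a b := funext fun b => U.symm b a
        rw [this, sq]

lemma integral_pi_disj {V : Type} [Fintype V] (U : Kernel) {a b c d : V}
    (hab : a ≠ b) (hac : a ≠ c) (had : a ≠ d) (hbc : b ≠ c) (hbd : b ≠ d) (hcd : c ≠ d) :
    ∫ x, U.toFun (x a) (x b) * U.toFun (x c) (x d) ∂(Measure.pi fun _ : V => mu0)
      = (∫ z, ∫ t, U.toFun z t ∂mu0 ∂mu0) ^ 2 := by
  classical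
  set p : V → Prop := fun v => v = a ∨ v = b with hp
  have hcp : ¬ p c := by simp [hp, hac.symm, hbc.symm]
  have hdp : ¬ p d := by simp [hp, had.symm, hbd.symm]
  set e := MeasurableEquiv.piEquivPiSubtypeProd (fun _ : V => ℝ) p with he
  have mp := measurePreserving_piEquivPiSubtypeProd (fun _ : V => mu0) p
  set F1 : ({v // p v} → ℝ) → ℝ :=
    fun w => U.toFun (w ⟨a, Or.inl rfl⟩) (w ⟨b, Or.inr rfl⟩) with hF1
  set F2 : ({v // ¬ p v} → ℝ) → ℝ := fun w => U.toFun (w ⟨c, hcp⟩) (w ⟨d, hdp⟩) with hF2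
  have key := mp.integral_comp e.measurableEmbedding (fun q => F1 q.1 * F2 q.2)
  have hreg : ∀ x : V → ℝ, F1 (e x).1 * F2 (e x).2
      = U.toFun (x a) (x b) * U.toFun (x c) (x d) := fun x => rfl
  have key : ∫ x, U.toFun (x a) (x b) * U.toFun (x c) (x d) ∂(Measure.pi fun _ : V => mu0)
      = ∫ q, F1 q.1 * F2 q.2 ∂((Measure.pi fun _ : {v // p v} => mu0).prod
          (Measure.pi fun _ : {v // ¬ p v} => mu0)) := key
  rw [key, integral_prod_mul F1 F2]
  have e1 : ∫ w, F1 w ∂(Measure.pi fun _ : {v // p v} => mu0)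
      = ∫ z, ∫ t, U.toFun z t ∂mu0 ∂mu0 :=
    integral_pi_edge U (fun h => hab (congrArg Subtype.val h))
  have e2 : ∫ w, F2 w ∂(Measure.pi fun _ : {v // ¬ p v} => mu0)
      = ∫ z, ∫ t, U.toFun z t ∂mu0 ∂mu0 :=
    integral_pi_edge U (fun h => hcd (congrArg Subtype.val h))
  rw [e1, e2, sq]

lemma volume_restrict_pi (V : Type) [Fintype V] :
    (volume : Measure (V → ℝ)).restrict (Set.univ.pi fun _ : V => Set.Icc (0:ℝ) 1)
      = Measure.pi fun _ : V => mu0 := by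
  refine (Measure.pi_eq fun s hs => ?_).symm
  rw [Measure.restrict_apply (MeasurableSet.univ_pi hs)]
  have h1 : (Set.univ.pi s) ∩ (Set.univ.pi fun _ : V => Set.Icc (0:ℝ) 1)
      = Set.univ.pi (fun i => s i ∩ Set.Icc (0:ℝ) 1) := by
    rw [← Set.pi_inter_distrib]
  rw [h1, volume_pi, Measure.pi_pi]
  exact Finset.prod_congr rfl fun i _ => (Measure.restrict_apply (hs i)).symm

lemma homDensity_pi {V : Type} [Fintype V] (H : SimpleGraph V) (U : Kernel) :
    homDensity H U = ∫ x, edgeProd H U x ∂(Measure.pi fun _ : V => mu0) := by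
  rw [homDensity, volume_restrict_pi]

lemma edgeProd_pair {V : Type} {H : SimpleGraph V} (U : Kernel) {a b c d : V}
    (hne : s(a,b) ≠ s(c,d)) (hE : H.edgeSet = {s(a,b), s(c,d)}) (x : V → ℝ) :
    edgeProd H U x = U.toFun (x a) (x b) * U.toFun (x c) (x d) := by
  rw [edgeProd, hE, finprod_mem_pair hne, Sym2.lift_mk, Sym2.lift_mk]

lemma homDensity_path {V : Type} [Fintype V] {H : SimpleGraph V} (U : Kernel) {a b c : V}
    (hab : a ≠ b) (hac : a ≠ c) (hbc : b ≠ c) (hE : H.edgeSet = {s(a,b), s(b,c)}) :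
    homDensity H U = ∫ z, (∫ t, U.toFun z t ∂mu0) ^ 2 ∂mu0 := by
  have hne : s(a,b) ≠ s(b,c) := by
    intro h
    rcases Sym2.eq_iff.mp h with ⟨h1, _⟩ | ⟨h1, _⟩
    · exact hab h1
    · exact hac h1
  rw [homDensity_pi]
  have heq : ∀ x : V → ℝ, edgeProd H U x = U.toFun (x a) (x b) * U.toFun (x b) (x c) :=
    edgeProd_pair U hne hE
  rw [show (fun x : V → ℝ => edgeProd H U x)
      = fun x => U.toFun (x a) (x b) * U.toFun (x b) (x c) from funext heq]
  exact integral_pi_path U hab hac hbc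

lemma homDensity_disj {V : Type} [Fintype V] {H : SimpleGraph V} (U : Kernel) {a b c d : V}
    (hab : a ≠ b) (hac : a ≠ c) (had : a ≠ d) (hbc : b ≠ c) (hbd : b ≠ d) (hcd : c ≠ d)
    (hE : H.edgeSet = {s(a,b), s(c,d)}) :
    homDensity H U = (∫ z, ∫ t, U.toFun z t ∂mu0 ∂mu0) ^ 2 := by
  have hne : s(a,b) ≠ s(c,d) := by
    intro h
    rcases Sym2.eq_iff.mp h with ⟨h1, _⟩ | ⟨h1, _⟩
    · exact hac h1
    · exact had h1
  rw [homDensity_pi]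
  have heq : ∀ x : V → ℝ, edgeProd H U x = U.toFun (x a) (x b) * U.toFun (x c) (x d) :=
    edgeProd_pair U hne hE
  rw [show (fun x : V → ℝ => edgeProd H U x)
      = fun x => U.toFun (x a) (x b) * U.toFun (x c) (x d) from funext heq]
  exact integral_pi_disj U hab hac had hbc hbd hcd

lemma two_edges_cases {V : Type} {H : SimpleGraph V} (h2 : H.edgeSet.ncard = 2) :
    (∃ a b c : V, a ≠ b ∧ a ≠ c ∧ b ≠ c ∧ H.edgeSet = {s(a,b), s(b,c)}) ∨
    (∃ a b c d : V, a ≠ b ∧ a ≠ c ∧ a ≠ d ∧ b ≠ c ∧ b ≠ d ∧ c ≠ d ∧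
      H.edgeSet = {s(a,b), s(c,d)}) := by
  obtain ⟨e1, e2, hne, hE⟩ := Set.ncard_eq_two.mp h2
  revert hne hE
  induction e1, e2 using Sym2.inductionOn₂ with
  | _ a b c d =>
    intro hne hE
    have hAab : H.Adj a b := H.mem_edgeSet.mp (hE ▸ Set.mem_insert _ _)
    have hAcd : H.Adj c d := H.mem_edgeSet.mp (hE ▸ Set.mem_insert_of_mem _ rfl)
    have hab := hAab.ne
    have hcd := hAcd.ne
    by_cases hca : c = a
    · subst hca
      left
      have hbd : b ≠ d := fun h => hne (by rw [h])
      refine ⟨b, c, d, fun h => hab h.symm, hbd, hcd, ?_⟩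
      rw [hE, Sym2.eq_swap (a := c) (b := b)]
    · by_cases hcb : c = b
      · subst hcb
        left
        have had : a ≠ d := fun h => hne (by rw [h, Sym2.eq_swap])
        refine ⟨a, c, d, hab, had, hcd, hE⟩
      · by_cases hda : d = a
        · subst hda
          left
          have hbc : b ≠ c := fun h => hne (by rw [h, Sym2.eq_swap])
          refine ⟨b, d, c, fun h => hab h.symm, hbc, fun h => hca h.symm, ?_⟩
          rw [hE, Sym2.eq_swap (a := d) (b := b), Sym2.eq_swap (a := c) (b := d)]
        · by_cases hdb : d = b
          · subst hdb
            left
            refine ⟨a, d, c, hab, fun h => hca h.symm, fun h => hcb h.symm, ?_⟩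
            rw [hE, Sym2.eq_swap (a := c) (b := d)]
          · right
            exact ⟨a, b, c, d, hab, fun h => hca h.symm, fun h => hda h.symm,
              fun h => hcb h.symm, fun h => hdb h.symm, hcd, hE⟩

lemma balanced_iff (U : Kernel) :
    U.Balanced ↔ ∀ᵐ z ∂mu0, (∫ t, U.toFun z t ∂mu0) = 0 := Iff.rfl

lemma g_measurable (U : Kernel) : Measurable fun z => ∫ t, U.toFun z t ∂mu0 :=
  (U.measurable'.stronglyMeasurable.integral_prod_right').measurable

lemma g_bound (U : Kernel) {C : ℝ} (hC : ∀ x y, |U.toFun x y| ≤ C) :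
    ∀ z, |∫ t, U.toFun z t ∂mu0| ≤ C := by
  intro z
  have h := norm_integral_le_of_norm_le_const (μ := mu0) (f := fun t => U.toFun z t) (C := C)
    (Filter.Eventually.of_forall fun t => by simpa [Real.norm_eq_abs] using hC z t)
  simpa [Real.norm_eq_abs, measure_univ] using h

lemma balanced_of_integral_sq_zero (U : Kernel)
    (h : ∫ z, (∫ t, U.toFun z t ∂mu0) ^ 2 ∂mu0 = 0) : U.Balanced := by
  obtain ⟨C, hC0, hC⟩ := U.boundNN
  have hgm : Measurable fun z => ∫ t, U.toFun z t ∂mu0 := g_measurable U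
  have hint : Integrable (fun z => (∫ t, U.toFun z t ∂mu0) ^ 2) mu0 := by
    refine integrable_bdd (hgm.pow_const 2) (C := C * C) fun z => ?_
    rw [abs_pow, sq]
    exact mul_le_mul (g_bound U hC z) (g_bound U hC z) (abs_nonneg _) hC0
  have hae := (integral_eq_zero_iff_of_nonneg
    (fun z => sq_nonneg (∫ t, U.toFun z t ∂mu0)) hint).mp h
  rw [balanced_iff]
  filter_upwards [hae] with z hz
  exact sq_eq_zero_iff.mp hz

lemma subgraph_ncard_coe {V : Type} {G : SimpleGraph V} (G' : G.Subgraph) :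
    G'.coe.edgeSet.ncard = G'.edgeSet.ncard := by
  rw [← SimpleGraph.Subgraph.image_coe_edgeSet_coe,
    Set.ncard_image_of_injective _ (Sym2.map.injective Subtype.val_injective)]

lemma iso_edge_ncard {V W : Type} {G : SimpleGraph V} {G'' : SimpleGraph W} (φ : G ≃g G'') :
    G.edgeSet.ncard = G''.edgeSet.ncard := by
  rw [← Nat.card_coe_set_eq, ← Nat.card_coe_set_eq]
  exact Nat.card_congr φ.mapEdgeSet

lemma pathGraph3_edgeSet :
    (SimpleGraph.pathGraph 3).edgeSet = {s((0 : Fin 3), 1), s(1, 2)} := by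
  ext e
  induction e using Sym2.ind with
  | _ a b =>
    simp only [SimpleGraph.mem_edgeSet, SimpleGraph.pathGraph_adj, Set.mem_insert_iff,
      Set.mem_singleton_iff, Sym2.eq_iff]
    revert a b
    decide

lemma pathGraph3_ncard : (SimpleGraph.pathGraph 3).edgeSet.ncard = 2 := by
  rw [pathGraph3_edgeSet]
  exact Set.ncard_pair (by decide)

lemma density_nonneg_of_two (H : FinGraph) (U : Kernel) (h2 : H.G.edgeSet.ncard = 2) :
    0 ≤ H.density U := by
  rcases two_edges_cases h2 with ⟨a, b, c, h1, h2', h3, hE⟩ |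
    ⟨a, b, c, d, h1, h2', h3, h4, h5, h6, hE⟩
  · rw [FinGraph.density, homDensity_path U h1 h2' h3 hE]
    exact integral_nonneg fun z => sq_nonneg _
  · rw [FinGraph.density, homDensity_disj U h1 h2' h3 h4 h5 h6 hE]
    exact sq_nonneg _

lemma density_zero_of_balanced (H : FinGraph) (U : Kernel) (h2 : H.G.edgeSet.ncard = 2)
    (hb : U.Balanced) : H.density U = 0 := by
  have hb' : ∀ᵐ z ∂mu0, (∫ t, U.toFun z t ∂mu0) = 0 := (balanced_iff U).mp hb
  rcases two_edges_cases h2 with ⟨a, b, c, h1, h2', h3, hE⟩ |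
    ⟨a, b, c, d, h1, h2', h3, h4, h5, h6, hE⟩
  · rw [FinGraph.density, homDensity_path U h1 h2' h3 hE]
    refine integral_eq_zero_of_ae ?_
    filter_upwards [hb'] with z hz
    simp [hz]
  · rw [FinGraph.density, homDensity_disj U h1 h2' h3 h4 h5 h6 hE]
    have h0 : ∫ z, ∫ t, U.toFun z t ∂mu0 ∂mu0 = 0 := integral_eq_zero_of_ae hb'
    simp [h0]

lemma mem_subDeck_two {D : Multiset FinGraph} {H : FinGraph} (hH : H ∈ subDeck D 2) :
    H.G.edgeSet.ncard = 2 := by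
  rw [subDeck, Multiset.mem_bind] at hH
  obtain ⟨G, hG, hH⟩ := hH
  rw [FinGraph.subs, Multiset.mem_map] at hH
  obtain ⟨G', hG', rfl⟩ := hH
  have h2 : G'.edgeSet.ncard = 2 := by
    have hG'' : G' ∈ (Set.toFinite {G'' : G.G.Subgraph | G''.edgeSet.ncard = 2}).toFinset := hG'
    have h3 : G' ∈ {G'' : G.G.Subgraph | G''.edgeSet.ncard = 2} :=
      (Set.Finite.mem_toFinset _).mp hG''
    exact h3
  exact (subgraph_ncard_coe G').trans h2
/-- For every `l`-deck `D` and every kernel `U`, the coefficient `c^D_{U,2}` is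
nonnegative; moreover, if `s_D(P_2) > 0`, then `c^D_{U,2} = 0` iff `U` is balanced. -/
theorem coeff_two_nonneg (l : ℕ) (D : Multiset FinGraph) (hD : IsDeck D l) (U : Kernel) :
    0 ≤ coeff D U 2 ∧ (0 < sD D (pathF 2) → (coeff D U 2 = 0 ↔ U.Balanced)) := by
  classical
  have hnonneg : ∀ r ∈ (subDeck D 2).map (fun H => H.density U), 0 ≤ r := by
    intro r hr
    obtain ⟨H, hH, rfl⟩ := Multiset.mem_map.mp hr
    exact density_nonneg_of_two H U (mem_subDeck_two hH)
  refine ⟨Multiset.sum_nonneg hnonneg, fun hs => ⟨fun hc => ?_, fun hb => ?_⟩⟩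
  · -- coeff = 0 → Balanced
    have hex : ∃ G ∈ D, {G' : G.G.Subgraph | Nonempty (G'.coe ≃g (pathF 2).G)}.Nonempty := by
      by_contra hno
      push_neg at hno
      have h0 : sD D (pathF 2) = 0 := by
        rw [sD]
        refine Multiset.sum_eq_zero ?_
        intro x hx
        obtain ⟨G, hG, rfl⟩ := Multiset.mem_map.mp hx
        rw [hno G hG, Set.ncard_empty]
      omega
    obtain ⟨G, hG, G', hG'⟩ := hex
    have φ : G'.coe ≃g SimpleGraph.pathGraph 3 := Classical.choice hG'
    have hedgecoe : G'.coe.edgeSet.ncard = 2 := (iso_edge_ncard φ).trans pathGraph3_ncard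
    have hedge : G'.edgeSet.ncard = 2 := (subgraph_ncard_coe G').symm.trans hedgecoe
    have hmem : FinGraph.of G'.coe ∈ subDeck D 2 := by
      rw [subDeck, Multiset.mem_bind]
      refine ⟨G, hG, ?_⟩
      rw [FinGraph.subs, Multiset.mem_map]
      exact ⟨G', Finset.mem_val.mpr ((Set.Finite.mem_toFinset _).mpr hedge), rfl⟩
    have hmem' : (FinGraph.of G'.coe).density U ∈ (subDeck D 2).map (fun H => H.density U) :=
      Multiset.mem_map_of_mem _ hmem
    have hle : (FinGraph.of G'.coe).density U ≤ coeff D U 2 :=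
      Multiset.single_le_sum hnonneg _ hmem'
    have hzero : (FinGraph.of G'.coe).density U = 0 :=
      le_antisymm (hc ▸ hle) (hnonneg _ hmem')
    set H := FinGraph.of G'.coe with hHdef
    have h2 : H.G.edgeSet.ncard = 2 := mem_subDeck_two hmem
    have hcard : Nat.card H.V = 3 := by
      have h := Nat.card_congr φ.toEquiv
      have h3 : Nat.card (Fin 3) = 3 := by simp
      exact h.trans h3
    rcases two_edges_cases h2 with ⟨a, b, c, h1, h2', h3, hE⟩ |
      ⟨a, b, c, d, h1, h2', h3, h4, h5, h6, hE⟩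
    · refine balanced_of_integral_sq_zero U ?_
      have hform : H.density U = ∫ z, (∫ t, U.toFun z t ∂mu0) ^ 2 ∂mu0 := by
        rw [FinGraph.density]; exact homDensity_path U h1 h2' h3 hE
      rw [← hform]; exact hzero
    · exfalso
      have hc4 : ({a, b, c, d} : Finset H.V).card = 4 := by
        rw [Finset.card_insert_of_notMem (by simp [h1, h2', h3]),
          Finset.card_insert_of_notMem (by simp [h4, h5]),
          Finset.card_insert_of_notMem (by simp [h6]), Finset.card_singleton]
      have h4le : 4 ≤ Nat.card H.V := by
        calc 4 = ({a, b, c, d} : Finset H.V).card := hc4.symm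
          _ ≤ Fintype.card H.V := Finset.card_le_univ _
          _ = Nat.card H.V := Nat.card_eq_fintype_card.symm
      omega
  · -- Balanced → coeff = 0
    rw [coeff]
    refine Multiset.sum_eq_zero ?_
    intro r hr
    obtain ⟨H, hH, rfl⟩ := Multiset.mem_map.mp hr
    exact density_zero_of_balanced H U (mem_subDeck_two hH) hb
end
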